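/- Let w ∈ ℂ^r, v := 1 − w (componentwise), m ∈ {0,1}, and for a ∈ {0,1}^r set Q_a(w) := ∏_j cos(π(w_j−a_j)/2). Define Λ(w) := diag(π^{|w|/2}/∏_j Γ((w_j+a_j)/2))_{a∈{0,1}^r} and E := (−1)^m·diag((√−1)^{|a|})_{a∈{0,1}^r}. Then (Γ(w)/(2π)^{|w|})·A(w) = J·Λ(w)^{−1}·E·Λ(v)·Jᵀ, where A(w) is the 2^r×2^r matrix with (δ,ε)-entry (−1)^m·exp((π√−1/2)∑_j ε_jδ_jw_j) and J = 2^{−r/2}(κ_a)_a. -/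

import Mathlib

open Matrix

/-- The sign `±1` associated to a Boolean. -/
def sg (b : Bool) : ℂ := if b then 1 else -1

/-- The exponent `0` or `1` associated to a Boolean. -/
def aN (b : Bool) : ℕ := if b then 1 else 0

/-- The `2^r × 2^r` matrix `A(w)` with `(δ,ε)`-entry
`(-1)^m exp((π√-1/2) ∑_j ε_j δ_j w_j)`. -/
noncomputable def Amat (r m : ℕ) (w : Fin r → ℂ) :
    Matrix (Fin r → Bool) (Fin r → Bool) ℂ :=
  Matrix.of fun δ ε =>
    (-1 : ℂ) ^ m * Complex.exp ((Real.pi : ℂ) * Complex.I / 2 * ∑ j, sg (ε j) * sg (δ j) * w j)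

/-- The orthogonal matrix `J = 2^{-r/2}(κ_a)_a`. -/
noncomputable def Jmat (r : ℕ) : Matrix (Fin r → Bool) (Fin r → Bool) ℂ :=
  Matrix.of fun ε a => (((2 : ℝ) ^ (-(r : ℝ) / 2) : ℝ) : ℂ) * ∏ j, sg (ε j) ^ aN (a j)

/-- The diagonal matrix `Λ(w) = diag(π^{|w|/2} / ∏_j Γ((w_j + a_j)/2))_{a ∈ {0,1}^r}`. -/
noncomputable def Lam (r : ℕ) (w : Fin r → ℂ) :
    Matrix (Fin r → Bool) (Fin r → Bool) ℂ :=
  Matrix.diagonal fun a =>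
    (Real.pi : ℂ) ^ ((∑ j, w j) / 2) / ∏ j, Complex.Gamma ((w j + aN (a j)) / 2)

/-- The ε-factor `E = (-1)^m diag((√-1)^{|a|})_{a ∈ {0,1}^r}`. -/
noncomputable def Emat (r m : ℕ) : Matrix (Fin r → Bool) (Fin r → Bool) ℂ :=
  Matrix.diagonal fun a => (-1 : ℂ) ^ m * Complex.I ^ (∑ j, aN (a j))

/- ### Auxiliary lemmas -/

lemma pi_c_ne : (Real.pi : ℂ) ≠ 0 := Complex.ofReal_ne_zero.mpr Real.pi_ne_zero

lemma cpow_sum' {x : ℂ} (hx : x ≠ 0) {ι : Type*} (s : Finset ι) (f : ι → ℂ) :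
    x ^ (∑ j ∈ s, f j) = ∏ j ∈ s, x ^ f j := by
  classical
  induction s using Finset.induction_on with
  | empty => simp
  | insert _ _ h ih =>
      rw [Finset.sum_insert h, Finset.prod_insert h, Complex.cpow_add _ _ hx, ih]

lemma sg_sq (b : Bool) : sg b * sg b = 1 := by cases b <;> simp [sg]

lemma sg_pm (b : Bool) : sg b = 1 ∨ sg b = -1 := by cases b <;> simp [sg]

/-- `cos x + s i sin x = exp (s i x)` for `s = ±1`. -/
lemma cos_add_sin_eq_exp (x : ℂ) {s : ℂ} (hs : s = 1 ∨ s = -1) :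
    Complex.cos x + s * Complex.I * Complex.sin x = Complex.exp (s * Complex.I * x) := by
  rcases hs with rfl | rfl
  · rw [show (1 : ℂ) * Complex.I * x = x * Complex.I by ring, Complex.exp_mul_I]; ring
  · rw [show (-1 : ℂ) * Complex.I * x = -x * Complex.I by ring, Complex.exp_mul_I,
      Complex.cos_neg, Complex.sin_neg]; ring

lemma sqrt_pi_ne : ((Real.sqrt Real.pi : ℝ) : ℂ) ≠ 0 := by
  simp [Real.sqrt_eq_zero', Real.pi_pos, not_le, Real.pi_ne_zero]

/-- The key scalar identity. -/
lemma key_scalar (w : ℂ) {s : ℂ} (hs : s = 1 ∨ s = -1)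
    (hA : Complex.Gamma (w / 2) ≠ 0) (hB : Complex.Gamma ((w + 1) / 2) ≠ 0)
    (hsin : Complex.sin ((Real.pi : ℂ) * w / 2) ≠ 0)
    (hcos : Complex.cos ((Real.pi : ℂ) * w / 2) ≠ 0) :
    Complex.Gamma (w / 2) * (Complex.Gamma ((1 - w) / 2))⁻¹ +
      s * Complex.I * (Complex.Gamma ((w + 1) / 2) * (Complex.Gamma ((2 - w) / 2))⁻¹) =
      (2 : ℂ) ^ ((1 : ℂ) - w) * Complex.Gamma w * ((Real.sqrt Real.pi : ℝ) : ℂ)⁻¹ *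
        Complex.exp (s * Complex.I * ((Real.pi : ℂ) * w / 2)) := by
  have hπ : (Real.pi : ℂ) ≠ 0 := pi_c_ne
  -- reflection at (w+1)/2 : Γ((w+1)/2) Γ((1-w)/2) = π / cos (πw/2)
  have h1 : Complex.Gamma ((w + 1) / 2) * Complex.Gamma ((1 - w) / 2) =
      (Real.pi : ℂ) / Complex.cos ((Real.pi : ℂ) * w / 2) := by
    have := Complex.Gamma_mul_Gamma_one_sub ((w + 1) / 2)
    rw [show (1 : ℂ) - (w + 1) / 2 = (1 - w) / 2 by ring] at this
    rw [this]
    congr 1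
    rw [show (Real.pi : ℂ) * ((w + 1) / 2) = (Real.pi : ℂ) * w / 2 + (Real.pi : ℂ) / 2 by ring,
      Complex.sin_add_pi_div_two]
  -- reflection at w/2 : Γ(w/2) Γ((2-w)/2) = π / sin (πw/2)
  have h2 : Complex.Gamma (w / 2) * Complex.Gamma ((2 - w) / 2) =
      (Real.pi : ℂ) / Complex.sin ((Real.pi : ℂ) * w / 2) := by
    have := Complex.Gamma_mul_Gamma_one_sub (w / 2)
    rw [show (1 : ℂ) - w / 2 = (2 - w) / 2 by ring] at this
    rw [this]
    congr 1
    ring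
  -- duplication
  have h3 : Complex.Gamma (w / 2) * Complex.Gamma ((w + 1) / 2) =
      Complex.Gamma w * (2 : ℂ) ^ ((1 : ℂ) - w) * ((Real.sqrt Real.pi : ℝ) : ℂ) := by
    have := Complex.Gamma_mul_Gamma_add_half (w / 2)
    rw [show w / 2 + 1 / 2 = (w + 1) / 2 by ring] at this
    rw [show (2 : ℂ) * (w / 2) = w by ring] at this
    exact this
  have hC : Complex.Gamma ((1 - w) / 2) =
      (Real.pi : ℂ) / (Complex.cos ((Real.pi : ℂ) * w / 2) * Complex.Gamma ((w + 1) / 2)) := by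
    field_simp at h1 ⊢
    linear_combination h1
  have hD : Complex.Gamma ((2 - w) / 2) =
      (Real.pi : ℂ) / (Complex.sin ((Real.pi : ℂ) * w / 2) * Complex.Gamma (w / 2)) := by
    field_simp at h2 ⊢
    linear_combination h2
  rw [hC, hD]
  rw [show ((Real.pi : ℂ) / (Complex.cos ((Real.pi : ℂ) * w / 2) * Complex.Gamma ((w + 1) / 2)))⁻¹
      = Complex.cos ((Real.pi : ℂ) * w / 2) * Complex.Gamma ((w + 1) / 2) / (Real.pi : ℂ) by
    rw [inv_div]]
  rw [show ((Real.pi : ℂ) / (Complex.sin ((Real.pi : ℂ) * w / 2) * Complex.Gamma (w / 2)))⁻¹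
      = Complex.sin ((Real.pi : ℂ) * w / 2) * Complex.Gamma (w / 2) / (Real.pi : ℂ) by
    rw [inv_div]]
  have hsq : ((Real.sqrt Real.pi : ℝ) : ℂ) * ((Real.sqrt Real.pi : ℝ) : ℂ) = (Real.pi : ℂ) := by
    rw [← Complex.ofReal_mul, Real.mul_self_sqrt Real.pi_pos.le]
  rw [← cos_add_sin_eq_exp _ hs]
  have hsqne := sqrt_pi_ne
  field_simp
  rw [show w * (Real.pi : ℂ) / 2 = (Real.pi : ℂ) * w / 2 by ring]
  linear_combination
    (Complex.cos ((Real.pi : ℂ) * w / 2) + s * Complex.I * Complex.sin ((Real.pi : ℂ) * w / 2)) *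
      ((Real.sqrt Real.pi : ℝ) : ℂ) * h3 +
    (Complex.cos ((Real.pi : ℂ) * w / 2) + s * Complex.I * Complex.sin ((Real.pi : ℂ) * w / 2)) *
      Complex.Gamma w * (2 : ℂ) ^ ((1 : ℂ) - w) * hsq


lemma sg_mul_pm (a b : Bool) : sg a * sg b = 1 ∨ sg a * sg b = -1 := by
  cases a <;> cases b <;> simp [sg]

lemma sin_ne (w : ℂ) (h1 : ∀ n : ℕ, w / 2 ≠ -(n : ℂ)) (h2 : ∀ n : ℕ, (2 - w) / 2 ≠ -(n : ℂ)) :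
    Complex.sin ((Real.pi : ℂ) * w / 2) ≠ 0 := by
  rw [Complex.sin_ne_zero_iff]
  intro k hk
  have h : (Real.pi : ℂ) * (w / 2) = (Real.pi : ℂ) * (k : ℂ) := by
    rw [show (Real.pi : ℂ) * (w / 2) = (Real.pi : ℂ) * w / 2 by ring, hk]; ring
  have hw2 : w / 2 = (k : ℂ) := mul_left_cancel₀ pi_c_ne h
  rcases le_or_gt k 0 with hk0 | hk0
  · obtain ⟨n, rfl⟩ := Int.exists_eq_neg_ofNat hk0
    exact h1 n (by rw [hw2]; push_cast; ring)
  · obtain ⟨n, hn⟩ := Int.eq_ofNat_of_zero_le (by omega : (0 : ℤ) ≤ k - 1)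
    apply h2 n
    have hk' : (k : ℂ) = (n : ℂ) + 1 := by
      have h' : k = (n : ℤ) + 1 := by omega
      rw [h']; push_cast; ring
    rw [show (2 - w) / 2 = 1 - w / 2 by ring, hw2, hk']; ring

lemma cos_ne (w : ℂ) (h1 : ∀ n : ℕ, (1 - w) / 2 ≠ -(n : ℂ)) (h2 : ∀ n : ℕ, (w + 1) / 2 ≠ -(n : ℂ)) :
    Complex.cos ((Real.pi : ℂ) * w / 2) ≠ 0 := by
  rw [Complex.cos_ne_zero_iff]
  intro k hk
  have h : (Real.pi : ℂ) * (w / 2) = (Real.pi : ℂ) * ((2 * (k : ℂ) + 1) / 2) := by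
    rw [show (Real.pi : ℂ) * (w / 2) = (Real.pi : ℂ) * w / 2 by ring, hk]; ring
  have hw2 : w / 2 = (2 * (k : ℂ) + 1) / 2 := mul_left_cancel₀ pi_c_ne h
  have hww : w = 2 * (k : ℂ) + 1 := by
    field_simp at hw2; exact hw2
  rcases le_or_gt 0 k with hk0 | hk0
  · obtain ⟨n, rfl⟩ := Int.eq_ofNat_of_zero_le hk0
    exact h1 n (by rw [hww]; push_cast; ring)
  · obtain ⟨n, hn⟩ := Int.exists_eq_neg_ofNat (by omega : k + 1 ≤ 0)
    apply h2 n
    have hk' : (k : ℂ) = -(n : ℂ) - 1 := by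
      have h' : k = -(n : ℤ) - 1 := by omega
      rw [h']; push_cast; ring
    rw [hww, hk']; ring

lemma cpow_ne_zero' {x : ℂ} (hx : x ≠ 0) (y : ℂ) : x ^ y ≠ 0 := by
  intro h
  rw [Complex.cpow_eq_zero_iff] at h
  exact hx h.1

lemma sqrt_pow_eq (r : ℕ) :
    (((Real.sqrt Real.pi : ℝ) : ℂ)) ^ r = (Real.pi : ℂ) ^ ((r : ℂ) / 2) := by
  have h1 : (Real.sqrt Real.pi) ^ r = Real.pi ^ ((r : ℝ) / 2) := by
    rw [Real.sqrt_eq_rpow, ← Real.rpow_natCast (Real.pi ^ ((1 : ℝ) / 2)) r,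
      ← Real.rpow_mul Real.pi_pos.le]
    ring_nf
  calc (((Real.sqrt Real.pi : ℝ) : ℂ)) ^ r = (((Real.sqrt Real.pi ^ r : ℝ) : ℝ) : ℂ) := by
        push_cast; ring
    _ = (((Real.pi ^ ((r : ℝ) / 2) : ℝ)) : ℂ) := by rw [h1]
    _ = (Real.pi : ℂ) ^ (((r : ℝ) / 2 : ℝ) : ℂ) := Complex.ofReal_cpow Real.pi_pos.le _
    _ = (Real.pi : ℂ) ^ ((r : ℂ) / 2) := by norm_num

lemma two_rpow_sq (r : ℕ) :
    (((2 : ℝ) ^ (-(r : ℝ) / 2) : ℝ) : ℂ) * (((2 : ℝ) ^ (-(r : ℝ) / 2) : ℝ) : ℂ) =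
      (((2 : ℂ) ^ r)⁻¹) := by
  rw [← Complex.ofReal_mul, ← Real.rpow_add two_pos,
    show -(r : ℝ) / 2 + -(r : ℝ) / 2 = -(r : ℝ) by ring, Real.rpow_neg (by norm_num),
    Real.rpow_natCast]
  push_cast
  ring

lemma const_collect (r : ℕ) (W : ℂ) :
    (((2 : ℝ) ^ (-(r : ℝ) / 2) : ℝ) : ℂ) * (((2 : ℝ) ^ (-(r : ℝ) / 2) : ℝ) : ℂ) *
        ((Real.pi : ℂ) ^ (W / 2))⁻¹ * (Real.pi : ℂ) ^ (((r : ℂ) - W) / 2) *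
        ((2 : ℂ) ^ ((r : ℂ) - W) * ((((Real.sqrt Real.pi : ℝ) : ℂ))⁻¹) ^ r) =
      (((2 : ℂ) * (Real.pi : ℂ)) ^ W)⁻¹ := by
  have h2 : (2 : ℂ) ≠ 0 := by norm_num
  have hπ : (Real.pi : ℂ) ≠ 0 := pi_c_ne
  rw [two_rpow_sq, inv_pow, sqrt_pow_eq,
    show (Real.pi : ℂ) ^ (((r : ℂ) - W) / 2) = (Real.pi : ℂ) ^ ((r : ℂ) / 2 - W / 2) by ring_nf,
    Complex.cpow_sub _ _ hπ, Complex.cpow_sub _ _ h2,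
    show (2 : ℂ) ^ ((r : ℂ)) = (2 : ℂ) ^ r from Complex.cpow_natCast 2 r,
    show ((2 : ℂ) * (Real.pi : ℂ)) = (((2 : ℝ) : ℂ) * ((Real.pi : ℝ) : ℂ)) by push_cast; ring,
    Complex.mul_cpow_ofReal_nonneg (by norm_num) Real.pi_pos.le,
    show ((2 : ℝ) : ℂ) = (2 : ℂ) by push_cast; ring]
  have hW : (Real.pi : ℂ) ^ (W / 2) * (Real.pi : ℂ) ^ (W / 2) = (Real.pi : ℂ) ^ W := by
    rw [← Complex.cpow_add _ _ hπ]; ring_nf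
  have n1 : (2 : ℂ) ^ r ≠ 0 := pow_ne_zero r h2
  have n2 : (Real.pi : ℂ) ^ (W / 2) ≠ 0 := cpow_ne_zero' hπ _
  have n3 : (Real.pi : ℂ) ^ ((r : ℂ) / 2) ≠ 0 := cpow_ne_zero' hπ _
  have n4 : (2 : ℂ) ^ W ≠ 0 := cpow_ne_zero' h2 _
  have n5 : (Real.pi : ℂ) ^ W ≠ 0 := cpow_ne_zero' hπ _
  field_simp
  linear_combination (-1 : ℂ) * hW

lemma JDJ_apply (r : ℕ) (d : (Fin r → Bool) → ℂ) (δ ε : Fin r → Bool) :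
    (Jmat r * Matrix.diagonal d * (Jmat r)ᵀ) δ ε =
      ∑ a : Fin r → Bool, Jmat r δ a * d a * Jmat r ε a := by
  rw [Matrix.mul_apply]
  simp only [Matrix.mul_diagonal, Matrix.transpose_apply]

lemma sum_factor (r : ℕ) (f : Fin r → Bool → ℂ) :
    ∑ a : Fin r → Bool, ∏ j, f j (a j) = ∏ j, (f j true + f j false) := by
  classical
  rw [← Fintype.prod_sum]
  exact Finset.prod_congr rfl fun j _ => Fintype.sum_bool _

theorem completed_gamma_matrix (r m : ℕ) (hm : m = 0 ∨ m = 1) (w : Fin r → ℂ)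
    (hw : ∀ j, ∀ n : ℕ,
      w j ≠ -(n : ℂ) ∧ w j / 2 ≠ -(n : ℂ) ∧ (w j + 1) / 2 ≠ -(n : ℂ) ∧
        (1 - w j) / 2 ≠ -(n : ℂ) ∧ (2 - w j) / 2 ≠ -(n : ℂ)) :
    ((∏ j, Complex.Gamma (w j)) / ((2 : ℂ) * (Real.pi : ℂ)) ^ (∑ j, w j)) •
        Amat r m w =
      Jmat r * (Lam r w)⁻¹ * Emat r m * Lam r (fun j => 1 - w j) * (Jmat r)ᵀ := by
  classical
  have hπ : (Real.pi : ℂ) ≠ 0 := pi_c_ne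
  have hGammaA : ∀ j, Complex.Gamma (w j / 2) ≠ 0 := fun j =>
    Complex.Gamma_ne_zero fun n => (hw j n).2.1
  have hGammaB : ∀ j, Complex.Gamma ((w j + 1) / 2) ≠ 0 := fun j =>
    Complex.Gamma_ne_zero fun n => (hw j n).2.2.1
  have hGw : ∀ a : Fin r → Bool,
      (∏ j, Complex.Gamma ((w j + aN (a j)) / 2)) ≠ 0 := by
    intro a
    rw [Finset.prod_ne_zero_iff]
    intro j _
    cases h : a j
    · simpa [aN, h] using hGammaA j
    · simpa [aN, h] using hGammaB j
  have hLinv : (Lam r w)⁻¹ = Matrix.diagonal (fun a : Fin r → Bool =>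
      (∏ j, Complex.Gamma ((w j + aN (a j)) / 2)) *
        (((Real.pi : ℂ) ^ ((∑ j, w j) / 2))⁻¹)) := by
    apply Matrix.inv_eq_right_inv
    have key : (fun a : Fin r → Bool =>
        (Real.pi : ℂ) ^ ((∑ j, w j) / 2) / (∏ j, Complex.Gamma ((w j + aN (a j)) / 2)) *
          ((∏ j, Complex.Gamma ((w j + aN (a j)) / 2)) *
            (((Real.pi : ℂ) ^ ((∑ j, w j) / 2))⁻¹))) = fun _ => (1 : ℂ) := by
      funext a
      have h1 := hGw a
      have h2 : (Real.pi : ℂ) ^ ((∑ j, w j) / 2) ≠ 0 := cpow_ne_zero' hπ _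
      field_simp
    rw [Lam, Matrix.diagonal_mul_diagonal, key, Matrix.diagonal_one]
  rw [hLinv, Emat, Lam, Matrix.mul_assoc (Jmat r), Matrix.diagonal_mul_diagonal,
    Matrix.mul_assoc (Jmat r), Matrix.diagonal_mul_diagonal]
  ext δ ε
  rw [JDJ_apply]
  simp only [Matrix.smul_apply, Amat, Matrix.of_apply, smul_eq_mul, Jmat]
  set c2 : ℂ := (((2 : ℝ) ^ (-(r : ℝ) / 2) : ℝ) : ℂ) with hc2
  set W : ℂ := ∑ j, w j with hW
  set V : ℂ := ∑ j, (1 - w j) with hV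
  have step1 : ∀ a : Fin r → Bool,
      (c2 * ∏ j, sg (δ j) ^ aN (a j)) *
          ((∏ j, Complex.Gamma ((w j + aN (a j)) / 2)) * (((Real.pi : ℂ) ^ (W / 2))⁻¹) *
              ((-1 : ℂ) ^ m * Complex.I ^ ∑ j, aN (a j)) *
            ((Real.pi : ℂ) ^ (V / 2) / ∏ j, Complex.Gamma ((1 - w j + aN (a j)) / 2))) *
          (c2 * ∏ j, sg (ε j) ^ aN (a j)) =
        (c2 * c2 * (((Real.pi : ℂ) ^ (W / 2))⁻¹) * (Real.pi : ℂ) ^ (V / 2) * (-1 : ℂ) ^ m) *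
          ∏ j, ((sg (δ j) * sg (ε j) * Complex.I) ^ aN (a j) *
            (Complex.Gamma ((w j + aN (a j)) / 2) *
              (Complex.Gamma ((1 - w j + aN (a j)) / 2))⁻¹)) := by
    intro a
    simp only [mul_pow, Finset.prod_mul_distrib]
    rw [Finset.prod_pow_eq_pow_sum, Finset.prod_inv_distrib]
    ring
  rw [Finset.sum_congr rfl (fun a _ => step1 a), ← Finset.mul_sum,
    sum_factor r (fun j b => (sg (δ j) * sg (ε j) * Complex.I) ^ aN b *
      (Complex.Gamma ((w j + aN b) / 2) * (Complex.Gamma ((1 - w j + aN b) / 2))⁻¹))]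
  have hj : ∀ j : Fin r,
      ((sg (δ j) * sg (ε j) * Complex.I) ^ aN true *
          (Complex.Gamma ((w j + aN true) / 2) *
            (Complex.Gamma ((1 - w j + aN true) / 2))⁻¹)) +
        ((sg (δ j) * sg (ε j) * Complex.I) ^ aN false *
          (Complex.Gamma ((w j + aN false) / 2) *
            (Complex.Gamma ((1 - w j + aN false) / 2))⁻¹)) =
      (2 : ℂ) ^ ((1 : ℂ) - w j) * Complex.Gamma (w j) * ((Real.sqrt Real.pi : ℝ) : ℂ)⁻¹ *
        Complex.exp (sg (δ j) * sg (ε j) * Complex.I * ((Real.pi : ℂ) * w j / 2)) := by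
    intro j
    have hk := key_scalar (w j) (sg_mul_pm (δ j) (ε j)) (hGammaA j) (hGammaB j)
      (sin_ne (w j) (fun n => (hw j n).2.1) (fun n => (hw j n).2.2.2.2))
      (cos_ne (w j) (fun n => (hw j n).2.2.2.1) (fun n => (hw j n).2.2.1))
    simp only [aN, Bool.false_eq_true, ite_true, ite_false, pow_one, pow_zero,
      Nat.cast_one, Nat.cast_zero, one_mul, add_zero]
    rw [show (1 - w j + 1) / 2 = (2 - w j) / 2 by ring]
    linear_combination hk
  rw [Finset.prod_congr rfl (fun j _ => hj j)]
  simp only [Finset.prod_mul_distrib]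
  rw [← cpow_sum' (by norm_num : (2 : ℂ) ≠ 0) Finset.univ (fun j => 1 - w j),
    ← Complex.exp_sum]
  simp only [Finset.prod_const, Finset.card_univ, Fintype.card_fin]
  have hVeq : (∑ j, ((1 : ℂ) - w j)) = (r : ℂ) - W := by
    rw [Finset.sum_sub_distrib, hW]
    simp [Finset.card_univ]
  have hV2 : V = (r : ℂ) - W := hV.trans hVeq
  have hexp : (Real.pi : ℂ) * Complex.I / 2 * ∑ j, sg (ε j) * sg (δ j) * w j
      = ∑ j, sg (δ j) * sg (ε j) * Complex.I * ((Real.pi : ℂ) * w j / 2) := by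
    rw [Finset.mul_sum]
    exact Finset.sum_congr rfl fun j _ => by ring
  rw [hexp, hVeq, hV2, hc2]
  have hc := const_collect r W
  linear_combination (-((∏ j, Complex.Gamma (w j)) * (-1 : ℂ) ^ m *
    Complex.exp (∑ j, sg (δ j) * sg (ε j) * Complex.I * ((Real.pi : ℂ) * w j / 2)))) * hc
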